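/- If A = (i..j), i.e. A is the full open interval, then K_{i,j}(A) = Π_{t ∈ (i..j]} (y_t - x_i). -/

import Mathlib

open Finset

noncomputable section

/-- The polynomial ring `ℤ[xₜ, y_q : t, q ∈ ℤ]`. -/
abbrev MyR : Type := MvPolynomial (ℤ ⊕ ℤ) ℤ

/-- Its field of fractions. -/
abbrev MyFF : Type := FractionRing MyR

/-- The variable `x_t`. -/
def Xv (t : ℤ) : MyFF := algebraMap MyR MyFF (MvPolynomial.X (Sum.inl t))

/-- The variable `y_q`. -/
def Yv (q : ℤ) : MyFF := algebraMap MyR MyFF (MvPolynomial.X (Sum.inr q))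

/-- `D_i(t) = max {s ∈ D ∪ {i} : s < t}`. -/
def Di (i : ℤ) (D : Finset ℤ) (t : ℤ) : ℤ :=
  WithBot.unbotD i (((insert i D).filter (fun s => s < t)).max)

/-- `H_{i,j}(A,B)` viewed in the fraction field. -/
def Hfr (i : ℤ) (A B : Finset ℤ) : MyFF :=
  ∑ D ∈ (B \ A).powerset, (-1 : MyFF) ^ D.card *
    (∏ t ∈ A, (Xv t - Xv (Di i D t))) / ∏ t ∈ B, (Xv t - Xv (Di i D t))

/-- `K_{i,j}(A) = Σ_{B ⊆ (i..j)} H_{i,j}(A,B) Π_{t ∈ B ∪ {i}} (y_{t+1} - x_t)`. -/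
def Kfr (i j : ℤ) (A : Finset ℤ) : MyFF :=
  ∑ B ∈ (Finset.Ioo i j).powerset, Hfr i A B * ∏ t ∈ insert i B, (Yv (t + 1) - Xv t)

lemma Di_empty (i t : ℤ) : Di i (∅ : Finset ℤ) t = i := by
  simp only [Di, insert_empty_eq, Finset.filter_singleton]
  split <;> simp

lemma Xv_sub_ne (t i : ℤ) (ht : t ≠ i) : Xv t - Xv i ≠ 0 := by
  intro h
  have h2 : (MvPolynomial.X (Sum.inl t) - MvPolynomial.X (Sum.inl i) : MyR) = 0 := by
    apply IsFractionRing.injective MyR MyFF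
    rw [map_sub, map_zero]; exact h
  exact ht (Sum.inl.inj (MvPolynomial.X_injective (sub_eq_zero.mp h2)))

/-- If `A = (i..j)` then `K_{i,j}(A) = Π_{t ∈ (i..j]} (y_t - x_i)`. -/
theorem stmt2 (i j : ℤ) (hij : i < j) :
    Kfr i j (Finset.Ioo i j) = ∏ t ∈ Finset.Ioc i j, (Yv t - Xv i) := by
  have key : ∀ B ∈ (Ioo i j).powerset,
      Hfr i (Ioo i j) B * ∏ t ∈ insert i B, (Yv (t + 1) - Xv t)
      = (Yv (i + 1) - Xv i) *
        ((∏ t ∈ B, (Yv (t + 1) - Xv t)) * ∏ t ∈ Ioo i j \ B, (Xv t - Xv i)) := by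
    intro B hB
    rw [mem_powerset] at hB
    have hiB : i ∉ B := fun h => by simpa using hB h
    have hH : Hfr i (Ioo i j) B = ∏ t ∈ Ioo i j \ B, (Xv t - Xv i) := by
      unfold Hfr
      rw [Finset.sdiff_eq_empty_iff_subset.mpr hB, Finset.powerset_empty,
        Finset.sum_singleton]
      simp only [Di_empty, Finset.card_empty, pow_zero, one_mul]
      rw [← Finset.prod_sdiff hB, mul_div_assoc]
      rw [div_self, mul_one]
      exact Finset.prod_ne_zero_iff.mpr fun t ht =>
        Xv_sub_ne t i (by have := hB ht; simp at this; omega)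
    rw [hH, Finset.prod_insert hiB]
    ring
  rw [Kfr, Finset.sum_congr rfl key, ← Finset.mul_sum, ← Finset.prod_add]
  have h1 : ∀ t, (Yv (t + 1) - Xv t + (Xv t - Xv i)) = Yv (t + 1) - Xv i := by
    intro t; ring
  simp only [h1]
  have h2 : Finset.Ioc i j = insert (i + 1) (Finset.Ioc (i + 1) j) := by
    ext t; simp [mem_Ioc]; omega
  rw [h2, Finset.prod_insert (by simp)]
  congr 1
  have h3 : Finset.Ioc (i + 1) j = (Finset.Ioo i j).map ⟨(· + 1), add_left_injective 1⟩ := by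
    ext t; simp [mem_Ioc, mem_Ioo]
    constructor
    · intro h; exact ⟨t - 1, by omega, by ring⟩
    · rintro ⟨a, ha, rfl⟩; omega
  rw [h3, Finset.prod_map]
  rfl

end
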